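/- For any reflexive graph X, the inclusion of the edge subcategory (ŷ ↓ X)_E — the full subcategory of the comma category ŷ ↓ X spanned by the objects of the form (E, f : ŷ(E) → X) — into ŷ ↓ X is a final functor. -/

import Mathlib

open CategoryTheory MonoidalCategory

/-- The category of (reflexive) graphs: an object is a set of vertices with an
irreflexive symmetric adjacency relation. -/
structure GraphCat : Type 1 where
  V : Type
  adj : V → V → Prop
  symm : ∀ {v w : V}, adj v w → adj w v
  loopless : ∀ v : V, ¬ adj v v

namespace GraphCat

/-- A graph map: whenever `v ∼ w`, either `f v = f w` or `f v ∼ f w`. -/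
structure Hom (X Y : GraphCat) where
  toFun : X.V → Y.V
  map_adj : ∀ {v w : X.V}, X.adj v w → toFun v = toFun w ∨ Y.adj (toFun v) (toFun w)

theorem Hom.ext' {X Y : GraphCat} {f g : Hom X Y} (h : f.toFun = g.toFun) : f = g := by
  cases f; cases g; cases h; rfl

instance : Category GraphCat where
  Hom := Hom
  id X := ⟨fun v => v, fun h => Or.inr h⟩
  comp f g := ⟨fun v => g.toFun (f.toFun v), fun {v w} h => by
    rcases f.map_adj h with h' | h'
    · exact Or.inl (congrArg g.toFun h')
    · exact g.map_adj h'⟩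
  id_comp f := Hom.ext' rfl
  comp_id f := Hom.ext' rfl
  assoc f g h := Hom.ext' rfl

/-- The one-vertex graph `I₀`. -/
def I0 : GraphCat := ⟨PUnit, fun _ _ => False, fun h => h, fun _ h => h⟩

/-- The graph `I₁` with two vertices `s = false` and `t = true` joined by an edge. -/
def I1 : GraphCat := ⟨Bool, fun v w => v ≠ w, Ne.symm, fun _ h => h rfl⟩

end GraphCat

open GraphCat

/-- The two objects of the category `𝔾`. -/
inductive GObj : Type
  | V : GObj
  | E : GObj

/-- The underlying sets realizing `𝔾` concretely: `V ↦ PUnit` and `E ↦ Bool`. -/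
def GFib : GObj → Type
  | .V => PUnit
  | .E => Bool

/-- The category `𝔾`, generated by `s, t : V → E`, `r : E → V`, `σ : E → E` subject to
`r∘s = r∘t = id`, `σ² = id`, `σ∘s = t`, `σ∘t = s`, `r∘σ = r`; realized concretely as the
full subcategory of `Set` spanned by a one-element set (for `V`) and a two-element set
(for `E`), which satisfies exactly these generators and relations. -/
instance : Category GObj where
  Hom a b := GFib a → GFib b
  id a := fun x => x
  comp f g := fun x => g (f x)
  id_comp _ := rfl
  comp_id _ := rfl
  assoc _ _ _ := rfl

/-- The factorization `ŷ : 𝔾 ⥤ Graph` of the Yoneda embedding through graphs, sending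
`V` to `I₀` and `E` to `I₁`. -/
def yHat : GObj ⥤ GraphCat where
  obj a := match a with
    | .V => I0
    | .E => I1
  map {a b} f := match a, b, f with
    | .V, .V, f => ⟨f, fun {_ _} h => h.elim⟩
    | .V, .E, f => ⟨f, fun {_ _} h => h.elim⟩
    | .E, .V, f => ⟨f, fun {_ _} _ => Or.inl rfl⟩
    | .E, .E, f => ⟨f, fun {v w} _ => eq_or_ne (f v) (f w)⟩
  map_id := by rintro (_ | _) <;> rfl
  map_comp := by rintro (_ | _) (_ | _) (_ | _) f g <;> rfl

/-- For any (reflexive) graph `X`, the inclusion of the edge subcategory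
`(ŷ ↓ X)_E` — the full subcategory of the comma category `ŷ ↓ X` spanned by objects
of the form `(E, f : ŷ(E) ⟶ X)` — into `ŷ ↓ X` is a final functor. -/
theorem edge_subcategory_final (X : GraphCat) :
    (ObjectProperty.ι
      (fun c : CostructuredArrow yHat X => c.left = GObj.E)).Final := by
  set P : ObjectProperty (CostructuredArrow yHat X) := fun c => c.left = GObj.E with hP
  have key : ∀ d : CostructuredArrow yHat X,
      ∃ r : StructuredArrow d (ObjectProperty.ι P),
      ∀ j, Nonempty (r ⟶ j) := by
    rintro ⟨a, ⟨⟨⟩⟩, f⟩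
    cases a with
    | V =>
      let e : yHat.obj GObj.E ⟶ X :=
        ⟨fun _ => f.toFun PUnit.unit, fun _ => Or.inl rfl⟩
      let c₀ : P.FullSubcategory := ⟨CostructuredArrow.mk (Y := GObj.E) e, rfl⟩
      let m₀ : CostructuredArrow.mk (S := yHat) f ⟶ c₀.obj :=
        CostructuredArrow.homMk (f' := c₀.obj) (fun _ => false) (Hom.ext' rfl)
      refine ⟨⟨⟨⟨⟩⟩, c₀, m₀⟩, ?_⟩
      rintro ⟨⟨⟨⟩⟩, ⟨⟨b, ⟨⟨⟩⟩, f'⟩, hb⟩, m⟩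
      cases hb
      have hw := congrArg Hom.toFun m.w
      let j : P.FullSubcategory := ⟨⟨GObj.E, ⟨PUnit.unit⟩, f'⟩, rfl⟩
      let h : c₀ ⟶ j :=
        ObjectProperty.homMk (CostructuredArrow.homMk (f := c₀.obj) (f' := j.obj)
          (fun _ => m.left PUnit.unit)
          (Hom.ext' (funext fun b => (congrFun hw PUnit.unit))))
      refine ⟨StructuredArrow.homMk h (CostructuredArrow.hom_ext _ _ ?_)⟩
      funext u
      rfl
    | E =>
      let c₀ : P.FullSubcategory := ⟨CostructuredArrow.mk (Y := GObj.E) f, rfl⟩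
      let m₀ : CostructuredArrow.mk (S := yHat) f ⟶ c₀.obj :=
        CostructuredArrow.homMk (f' := c₀.obj) (𝟙 GObj.E) (Hom.ext' rfl)
      refine ⟨⟨⟨⟨⟩⟩, c₀, m₀⟩, ?_⟩
      rintro ⟨⟨⟨⟩⟩, ⟨⟨b, ⟨⟨⟩⟩, f'⟩, hb⟩, m⟩
      cases hb
      have hw := congrArg Hom.toFun m.w
      let j : P.FullSubcategory := ⟨⟨GObj.E, ⟨PUnit.unit⟩, f'⟩, rfl⟩
      let h : c₀ ⟶ j :=
        ObjectProperty.homMk (CostructuredArrow.homMk (f := c₀.obj) (f' := j.obj) m.left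
          (Hom.ext' (funext fun b => (congrFun hw b))))
      refine ⟨StructuredArrow.homMk h (CostructuredArrow.hom_ext _ _ ?_)⟩
      funext u
      rfl
  constructor
  intro d
  obtain ⟨r, hr⟩ := key d
  haveI : Nonempty (StructuredArrow d (ObjectProperty.ι P)) := ⟨r⟩
  apply zigzag_isConnected
  intro j₁ j₂
  exact Relation.ReflTransGen.trans
    (Relation.ReflTransGen.single (Or.inr (hr j₁)))
    (Relation.ReflTransGen.single (Or.inl (hr j₂)))
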